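/- For every u in the two-sided ideal I of the tensor product bialgebra C = A ⊗_K B generated by {ι(x) ⊗ 1 − 1 ⊗ π(x) : x ∈ O}, the comultiplication satisfies Δ_C(u) ∈ I ⊗ C + C ⊗ I, where I ⊗ C and C ⊗ I denote the images of the natural maps I ⊗_K C → C ⊗_K C and C ⊗_K I → C ⊗_K C, viewed as K-submodules of C ⊗_K C. -/

import Mathlib

open TensorProduct

universe u

set_option maxHeartbeats 1600000 in
set_option synthInstance.maxHeartbeats 400000 in
/-- Let `K` be a field, `A`, `B`, `O` bialgebras over `K`,
`ι : O → A` and `π : O → B` bialgebra homomorphisms with the image of `ι`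
contained in the center of `A`, and let `I` be the two-sided ideal of the tensor
product bialgebra `C = A ⊗[K] B` generated by `{ι x ⊗ 1 - 1 ⊗ π x : x ∈ O}`.
Then for every `u ∈ I` the comultiplication satisfies
`Δ_C u ∈ I ⊗ C + C ⊗ I`, where `I ⊗ C` and `C ⊗ I` are the images of the
natural maps `I ⊗[K] C → C ⊗[K] C` and `C ⊗[K] I → C ⊗[K] C` viewed as
`K`-submodules of `C ⊗[K] C`. -/
theorem stmt_2 {K A B O : Type u} [Field K]
    [Ring A] [Ring B] [Ring O]
    [Bialgebra K A] [Bialgebra K B] [Bialgebra K O]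
    (ι : O →ₐc[K] A) (π : O →ₐc[K] B)
    (hcentral : ∀ x : O, ι x ∈ Set.center A)
    (I : TwoSidedIdeal (A ⊗[K] B))
    (hI : I = TwoSidedIdeal.span
      {c : A ⊗[K] B | ∃ x : O, c = ι x ⊗ₜ[K] (1 : B) - (1 : A) ⊗ₜ[K] π x})
    (u : A ⊗[K] B) (hu : u ∈ I) :
    Coalgebra.comul (R := K) u ∈
      LinearMap.range (TensorProduct.map
          ((Submodule.restrictScalars K (TwoSidedIdeal.asIdeal I)).subtype)
          (LinearMap.id : (A ⊗[K] B) →ₗ[K] (A ⊗[K] B)))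
      + LinearMap.range (TensorProduct.map
          (LinearMap.id : (A ⊗[K] B) →ₗ[K] (A ⊗[K] B))
          ((Submodule.restrictScalars K (TwoSidedIdeal.asIdeal I)).subtype)) := by
  set I' : Submodule K (A ⊗[K] B) := Submodule.restrictScalars K (TwoSidedIdeal.asIdeal I) with hI'
  set P : Submodule K ((A ⊗[K] B) ⊗[K] (A ⊗[K] B)) :=
    LinearMap.range (TensorProduct.map I'.subtype (LinearMap.id : (A ⊗[K] B) →ₗ[K] (A ⊗[K] B))) with hP
  set Q : Submodule K ((A ⊗[K] B) ⊗[K] (A ⊗[K] B)) :=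
    LinearMap.range (TensorProduct.map (LinearMap.id : (A ⊗[K] B) →ₗ[K] (A ⊗[K] B)) I'.subtype) with hQ
  -- pure tensors membership
  have hPt : ∀ (i c : (A ⊗[K] B)), i ∈ I → i ⊗ₜ[K] c ∈ P := fun i c hi =>
    ⟨(⟨i, hi⟩ : I') ⊗ₜ[K] c, rfl⟩
  have hQt : ∀ (c i : (A ⊗[K] B)), i ∈ I → c ⊗ₜ[K] i ∈ Q := fun c i hi =>
    ⟨c ⊗ₜ[K] (⟨i, hi⟩ : I'), rfl⟩
  -- P is closed under multiplication by arbitrary elements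
  have hPl : ∀ (x y : (A ⊗[K] B) ⊗[K] (A ⊗[K] B)), y ∈ P → x * y ∈ P := by
    rintro x y ⟨t, rfl⟩
    induction t using TensorProduct.induction_on with
    | zero => simpa using P.zero_mem
    | tmul i c =>
        simp only [TensorProduct.map_tmul, Submodule.coe_subtype, LinearMap.id_coe, id_eq]
        induction x using TensorProduct.induction_on with
        | zero => simpa using P.zero_mem
        | tmul a b =>
            rw [Algebra.TensorProduct.tmul_mul_tmul]
            exact hPt _ _ (I.mul_mem_left _ _ i.2)
        | add x₁ x₂ h₁ h₂ => rw [add_mul]; exact P.add_mem h₁ h₂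
    | add t₁ t₂ h₁ h₂ => rw [map_add, mul_add]; exact P.add_mem h₁ h₂
  have hPr : ∀ (x y : (A ⊗[K] B) ⊗[K] (A ⊗[K] B)), y ∈ P → y * x ∈ P := by
    rintro x y ⟨t, rfl⟩
    induction t using TensorProduct.induction_on with
    | zero => simpa using P.zero_mem
    | tmul i c =>
        simp only [TensorProduct.map_tmul, Submodule.coe_subtype, LinearMap.id_coe, id_eq]
        induction x using TensorProduct.induction_on with
        | zero => simpa using P.zero_mem
        | tmul a b =>
            rw [Algebra.TensorProduct.tmul_mul_tmul]
            exact hPt _ _ (I.mul_mem_right _ _ i.2)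
        | add x₁ x₂ h₁ h₂ => rw [mul_add]; exact P.add_mem h₁ h₂
    | add t₁ t₂ h₁ h₂ => rw [map_add, add_mul]; exact P.add_mem h₁ h₂
  have hQl : ∀ (x y : (A ⊗[K] B) ⊗[K] (A ⊗[K] B)), y ∈ Q → x * y ∈ Q := by
    rintro x y ⟨t, rfl⟩
    induction t using TensorProduct.induction_on with
    | zero => simpa using Q.zero_mem
    | tmul c i =>
        simp only [TensorProduct.map_tmul, Submodule.coe_subtype, LinearMap.id_coe, id_eq]
        induction x using TensorProduct.induction_on with
        | zero => simpa using Q.zero_mem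
        | tmul a b =>
            rw [Algebra.TensorProduct.tmul_mul_tmul]
            exact hQt _ _ (I.mul_mem_left _ _ i.2)
        | add x₁ x₂ h₁ h₂ => rw [add_mul]; exact Q.add_mem h₁ h₂
    | add t₁ t₂ h₁ h₂ => rw [map_add, mul_add]; exact Q.add_mem h₁ h₂
  have hQr : ∀ (x y : (A ⊗[K] B) ⊗[K] (A ⊗[K] B)), y ∈ Q → y * x ∈ Q := by
    rintro x y ⟨t, rfl⟩
    induction t using TensorProduct.induction_on with
    | zero => simpa using Q.zero_mem
    | tmul c i =>
        simp only [TensorProduct.map_tmul, Submodule.coe_subtype, LinearMap.id_coe, id_eq]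
        induction x using TensorProduct.induction_on with
        | zero => simpa using Q.zero_mem
        | tmul a b =>
            rw [Algebra.TensorProduct.tmul_mul_tmul]
            exact hQt _ _ (I.mul_mem_right _ _ i.2)
        | add x₁ x₂ h₁ h₂ => rw [mul_add]; exact Q.add_mem h₁ h₂
    | add t₁ t₂ h₁ h₂ => rw [map_add, add_mul]; exact Q.add_mem h₁ h₂
  -- P + Q as a two-sided ideal of (A ⊗[K] B) ⊗ (A ⊗[K] B)
  let J : TwoSidedIdeal ((A ⊗[K] B) ⊗[K] (A ⊗[K] B)) := TwoSidedIdeal.mk' (P + Q : Submodule K ((A ⊗[K] B) ⊗[K] (A ⊗[K] B)))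
    (Submodule.zero_mem _) (fun h₁ h₂ => Submodule.add_mem _ h₁ h₂)
    (fun h => Submodule.neg_mem _ h)
    (fun {x y} hy => by
      rcases Submodule.mem_sup.mp hy with ⟨p, hp, q, hq, rfl⟩
      rw [mul_add]
      exact Submodule.add_mem _ (Submodule.mem_sup_left (hPl x p hp))
        (Submodule.mem_sup_right (hQl x q hq)))
    (fun {x y} hx => by
      rcases Submodule.mem_sup.mp hx with ⟨p, hp, q, hq, rfl⟩
      rw [add_mul]
      exact Submodule.add_mem _ (Submodule.mem_sup_left (hPr y p hp))
        (Submodule.mem_sup_right (hQr y q hq)))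
  -- the comultiplication as an algebra hom
  let Δ : (A ⊗[K] B) →ₐ[K] (A ⊗[K] B) ⊗[K] (A ⊗[K] B) := Bialgebra.comulAlgHom K (A ⊗[K] B)
  have key : ∀ v, v ∈ I → v ∈ J.comap Δ := by
    intro v hv
    rw [hI] at hv
    refine TwoSidedIdeal.mem_span_iff.mp hv (J.comap Δ) ?_
    rintro c ⟨x, rfl⟩
    rw [SetLike.mem_coe, TwoSidedIdeal.mem_comap, TwoSidedIdeal.mem_mk']
    -- compute Δ of the generator
    show (Δ (ι x ⊗ₜ[K] (1 : B) - (1 : A) ⊗ₜ[K] π x)) ∈ (P + Q : Submodule K ((A ⊗[K] B) ⊗[K] (A ⊗[K] B)))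
    have hΔ : ∀ (a : A) (b : B), Δ (a ⊗ₜ[K] b) =
        TensorProduct.tensorTensorTensorComm K A A B B
          (Coalgebra.comul a ⊗ₜ[K] Coalgebra.comul b) := by
      intro a b
      show Coalgebra.comul (R := K) (a ⊗ₜ[K] b) = _
      rw [TensorProduct.comul_def]
      simp
      rfl
    rw [map_sub, hΔ, hΔ]
    have hcι : Coalgebra.comul (R := K) (ι x)
        = TensorProduct.map ι.toLinearMap ι.toLinearMap (Coalgebra.comul x) :=
      (CoalgHomClass.map_comp_comul_apply ι x).symm
    have hcπ : Coalgebra.comul (R := K) (π x)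
        = TensorProduct.map π.toLinearMap π.toLinearMap (Coalgebra.comul x) :=
      (CoalgHomClass.map_comp_comul_apply π x).symm
    rw [hcι, hcπ, Bialgebra.comul_one, Bialgebra.comul_one]
    have hone : (1 : A ⊗[K] A) = (1 : A) ⊗ₜ[K] (1 : A) := rfl
    have honeB : (1 : B ⊗[K] B) = (1 : B) ⊗ₜ[K] (1 : B) := rfl
    rw [hone, honeB]
    -- induct on comul x
    induction Coalgebra.comul (R := K) x using TensorProduct.induction_on with
    | zero =>
        simp only [map_zero, TensorProduct.zero_tmul, TensorProduct.tmul_zero, sub_zero]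
        exact Submodule.zero_mem _
    | tmul x₁ x₂ =>
        simp only [TensorProduct.map_tmul,
          TensorProduct.tensorTensorTensorComm_tmul, CoalgHom.coe_toLinearMap,
          BialgHom.coe_toLinearMap, LinearMap.coe_coe]
        show (ι x₁ ⊗ₜ[K] (1 : B)) ⊗ₜ[K] (ι x₂ ⊗ₜ[K] (1 : B))
            - ((1 : A) ⊗ₜ[K] π x₁) ⊗ₜ[K] ((1 : A) ⊗ₜ[K] π x₂) ∈ P + Q
        have hgen₁ : (ι x₁ ⊗ₜ[K] (1 : B) - (1 : A) ⊗ₜ[K] π x₁) ∈ I := by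
          rw [hI]; exact TwoSidedIdeal.subset_span ⟨x₁, rfl⟩
        have hgen₂ : (ι x₂ ⊗ₜ[K] (1 : B) - (1 : A) ⊗ₜ[K] π x₂) ∈ I := by
          rw [hI]; exact TwoSidedIdeal.subset_span ⟨x₂, rfl⟩
        have : (ι x₁ ⊗ₜ[K] (1 : B)) ⊗ₜ[K] (ι x₂ ⊗ₜ[K] (1 : B))
            - ((1 : A) ⊗ₜ[K] π x₁) ⊗ₜ[K] ((1 : A) ⊗ₜ[K] π x₂)
            = (ι x₁ ⊗ₜ[K] (1 : B) - (1 : A) ⊗ₜ[K] π x₁) ⊗ₜ[K] (ι x₂ ⊗ₜ[K] (1 : B))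
              + ((1 : A) ⊗ₜ[K] π x₁) ⊗ₜ[K]
                  (ι x₂ ⊗ₜ[K] (1 : B) - (1 : A) ⊗ₜ[K] π x₂) := by
          rw [TensorProduct.sub_tmul, TensorProduct.tmul_sub]; abel
        rw [this]
        exact Submodule.add_mem _
          (Submodule.mem_sup_left (hPt _ _ hgen₁))
          (Submodule.mem_sup_right (hQt _ _ hgen₂))
    | add t₁ t₂ h₁ h₂ =>
        rw [map_add, map_add, TensorProduct.add_tmul, TensorProduct.tmul_add, map_add, map_add]
        have : ∀ s₁ s₂ s₃ s₄ : (A ⊗[K] B) ⊗[K] (A ⊗[K] B), (s₁ + s₂) - (s₃ + s₄) = (s₁ - s₃) + (s₂ - s₄) := by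
          intros; abel
        rw [this]
        exact Submodule.add_mem _ h₁ h₂
  have key' := key u hu
  rw [TwoSidedIdeal.mem_comap, TwoSidedIdeal.mem_mk'] at key'
  exact key'
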